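/- Let β > 0, n ≥ 1, and let V : ℝ → ℝ ∪ {∞} be any potential such that Z = ∫_{W_n} exp(−β·H_n(x)) dx is finite and positive, where H_n(x) = −Σ_{1≤i<j≤n} log|x_i − x_j| + Σ_{i=1}^n V(x_i) and W_n = {x ∈ ℝ^n : x_1 < ⋯ < x_n}. Let f(x) = Z^{−1}·exp(−β·H_n(x))·1_{W_n}(x) be the density of the ordered β-Coulomb gas. Then f is log-supermodular: f(x)·f(y) ≤ f(x ∧ y)·f(x ∨ y) for all x, y ∈ ℝ^n, where ∧ and ∨ denote componentwise minimum and maximum. Consequently the coordinates of the β-Coulomb gas are positively associated: for any two bounded measurable functions φ, ψ : ℝ^n → ℝ that are nondecreasing in each coordinate, E[φ(X)·ψ(X)] ≥ E[φ(X)]·E[ψ(X)] when X has density f. -/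

import Mathlib

open scoped BigOperators
open MeasureTheory

noncomputable section

/-- `exp(-t)` for an extended-real `t`, with `exp(-∞) = 0`. -/
def expNeg (t : EReal) : ℝ :=
  if t = ⊤ then 0 else if t = ⊥ then 0 else Real.exp (-(t.toReal))

open Classical in
/-- The unnormalized density `exp(-β H_n(x)) 1_{W_n}(x)` of the ordered β-Coulomb gas
with potential `V : ℝ → ℝ ∪ {∞}`. -/
def coulombDensity (n : ℕ) (β : ℝ) (V : ℝ → EReal) (x : Fin n → ℝ) : ℝ :=
  if StrictMono x then
    (∏ i : Fin n, ∏ j : Fin n, if i < j then (x j - x i) ^ β else 1) *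
      ∏ i : Fin n, expNeg ((β : EReal) * V (x i))
  else 0

/-- The (normalized) ordered β-Coulomb gas as a measure on `ℝⁿ`. -/
def coulombMeasure (n : ℕ) (β : ℝ) (V : ℝ → EReal) : Measure (Fin n → ℝ) :=
  volume.withDensity fun x =>
    ENNReal.ofReal (coulombDensity n β V x / ∫ z : Fin n → ℝ, coulombDensity n β V z)


-- ## Auxiliary lemmas

section Aux
open Classical

lemma aux_mul_add_le (x y z : ENNReal) (hx : x ≤ z) (hy : y ≤ z) :
    x*z + y*z ≤ z*z + x*y := by
  rcases eq_or_ne z ⊤ with hz | hz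
  · subst hz
    rcases eq_or_ne x 0 with hx0 | hx0
    · rcases eq_or_ne y 0 with hy0 | hy0
      · simp [hx0, hy0]
      · simp [ENNReal.top_mul hy0, hx0]
    · simp [ENNReal.top_mul hx0]
  · have hxt : x ≠ ⊤ := fun h => hz (top_le_iff.1 (h ▸ hx))
    have hyt : y ≠ ⊤ := fun h => hz (top_le_iff.1 (h ▸ hy))
    lift z to NNReal using hz
    lift x to NNReal using hxt
    lift y to NNReal using hyt
    rw [← ENNReal.coe_mul, ← ENNReal.coe_mul, ← ENNReal.coe_mul, ← ENNReal.coe_mul,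
      ← ENNReal.coe_add, ← ENNReal.coe_add, ENNReal.coe_le_coe]
    have hx' : (x:ℝ) ≤ z := by exact_mod_cast hx
    have hy' : (y:ℝ) ≤ z := by exact_mod_cast hy
    have : (x:ℝ)*z + y*z ≤ z*z + x*y := by nlinarith [(z-(x:ℝ)), (z-(y:ℝ))]
    exact_mod_cast this

lemma aux_two_point (a b c d p q r s : ENNReal)
    (h1 : a*c ≤ p*r) (h2 : b*d ≤ q*s) (h3 : a*d ≤ p*s) (h4 : b*c ≤ p*s) :
    a*d + b*c ≤ p*s + q*r := by
  set P := p*s with hP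
  rcases eq_or_ne P 0 with h0 | h0
  · rw [h0] at h3 h4
    simp [le_zero_iff.1 h3, le_zero_iff.1 h4]
  rcases eq_or_ne P ⊤ with ht | ht
  · rw [ht]; exact le_top.trans_eq (by simp)
  · rw [← ENNReal.mul_le_mul_iff_right h0 ht]
    have step1 : P * (a*d + b*c) ≤ P*P + (a*d)*(b*c) := by
      calc P * (a*d + b*c) = (a*d)*P + (b*c)*P := by ring
        _ ≤ P*P + (a*d)*(b*c) := aux_mul_add_le _ _ _ h3 h4
    have step2 : (a*d)*(b*c) = (a*c)*(b*d) := by ring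
    have step3 : (a*c)*(b*d) ≤ (p*r)*(q*s) := mul_le_mul' h1 h2
    calc P * (a*d + b*c) ≤ P*P + (p*r)*(q*s) := by
          refine step1.trans (add_le_add_right ?_ _); rw [step2]; exact step3
      _ = P * (P + q*r) := by rw [hP]; ring

lemma aux_star (G₁ G₂ G₃ G₄ : ℝ → ENNReal)
    (hyp : ∀ t s : ℝ, G₁ t * G₂ s ≤ G₃ (t ⊓ s) * G₄ (t ⊔ s)) (t s : ℝ) :
    G₁ t * G₂ s + G₁ s * G₂ t ≤ G₃ t * G₄ s + G₃ s * G₄ t := by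
  rcases le_total t s with h | h
  · have h1 := hyp t t
    have h2 := hyp s s
    have h3 := hyp t s
    have h4 := hyp s t
    rw [inf_idem, sup_idem] at h1 h2
    rw [inf_eq_left.2 h, sup_eq_right.2 h] at h3
    rw [inf_eq_right.2 h, sup_eq_left.2 h] at h4
    exact aux_two_point _ _ _ _ _ _ _ _ h1 h2 h3 h4
  · have h1 := hyp s s
    have h2 := hyp t t
    have h3 := hyp s t
    have h4 := hyp t s
    rw [inf_idem, sup_idem] at h1 h2
    rw [inf_eq_left.2 h, sup_eq_right.2 h] at h3
    rw [inf_eq_right.2 h, sup_eq_left.2 h] at h4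
    have := aux_two_point _ _ _ _ _ _ _ _ h1 h2 h3 h4
    calc G₁ t * G₂ s + G₁ s * G₂ t = G₁ s * G₂ t + G₁ t * G₂ s := by ring
      _ ≤ G₃ s * G₄ t + G₃ t * G₄ s := this
      _ = G₃ t * G₄ s + G₃ s * G₄ t := by ring

lemma aux_oneDim (G₁ G₂ G₃ G₄ : ℝ → ENNReal)
    (m1 : Measurable G₁) (m2 : Measurable G₂) (m3 : Measurable G₃) (m4 : Measurable G₄)
    (hyp : ∀ t s : ℝ, G₁ t * G₂ s ≤ G₃ (t ⊓ s) * G₄ (t ⊔ s)) :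
    (∫⁻ t, G₁ t) * (∫⁻ t, G₂ t) ≤ (∫⁻ t, G₃ t) * (∫⁻ t, G₄ t) := by
  have key : ∀ (F H : ℝ → ENNReal), Measurable F → Measurable H →
      (∫⁻ s, ∫⁻ t, (F t * H s + F s * H t)) = 2 * ((∫⁻ t, F t) * (∫⁻ t, H t)) := by
    intro F H mF mH
    have : ∀ s : ℝ, (∫⁻ t, (F t * H s + F s * H t)) =
        (∫⁻ t, F t) * H s + F s * (∫⁻ t, H t) := by
      intro s
      rw [lintegral_add_left (mF.mul_const _)]
      rw [lintegral_mul_const _ mF, lintegral_const_mul _ mH]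
    simp_rw [this]
    rw [lintegral_add_left ((mH.const_mul _) : Measurable fun s => (∫⁻ t, F t) * H s)]
    rw [lintegral_const_mul _ mH, lintegral_mul_const _ mF]
    ring
  have mono : (∫⁻ s, ∫⁻ t, (G₁ t * G₂ s + G₁ s * G₂ t)) ≤
      (∫⁻ s, ∫⁻ t, (G₃ t * G₄ s + G₃ s * G₄ t)) := by
    refine lintegral_mono fun s => lintegral_mono fun t => ?_
    exact aux_star G₁ G₂ G₃ G₄ hyp t s
  rw [key G₁ G₂ m1 m2, key G₃ G₄ m3 m4] at mono
  exact (ENNReal.mul_le_mul_iff_right (two_ne_zero) (by norm_num)).1 mono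

lemma aux_insertNth_inf {n : ℕ} (t s : ℝ) (y z : Fin n → ℝ) :
    Fin.insertNth (α := fun _ : Fin (n+1) => ℝ) 0 (t ⊓ s) (y ⊓ z) =
      Fin.insertNth 0 t y ⊓ Fin.insertNth 0 s z := by
  ext j
  rw [Pi.inf_apply]
  refine Fin.cases ?_ (fun i => ?_) j
  · simp
  · have h0 : (0 : Fin (n+1)).succAbove i = i.succ := rfl
    rw [← h0, Fin.insertNth_apply_succAbove, Fin.insertNth_apply_succAbove,
      Fin.insertNth_apply_succAbove, Pi.inf_apply]

lemma aux_insertNth_sup {n : ℕ} (t s : ℝ) (y z : Fin n → ℝ) :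
    Fin.insertNth (α := fun _ : Fin (n+1) => ℝ) 0 (t ⊔ s) (y ⊔ z) =
      Fin.insertNth 0 t y ⊔ Fin.insertNth 0 s z := by
  ext j
  rw [Pi.sup_apply]
  refine Fin.cases ?_ (fun i => ?_) j
  · simp
  · have h0 : (0 : Fin (n+1)).succAbove i = i.succ := rfl
    rw [← h0, Fin.insertNth_apply_succAbove, Fin.insertNth_apply_succAbove,
      Fin.insertNth_apply_succAbove, Pi.sup_apply]

/-- A continuous "four functions" theorem (Ahlswede–Daykin type) on `ℝⁿ` with
Lebesgue measure, for measurable `ℝ≥0∞`-valued functions. -/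
theorem aux_master : ∀ (n : ℕ) (h₁ h₂ h₃ h₄ : (Fin n → ℝ) → ENNReal),
    Measurable h₁ → Measurable h₂ → Measurable h₃ → Measurable h₄ →
    (∀ x y, h₁ x * h₂ y ≤ h₃ (x ⊓ y) * h₄ (x ⊔ y)) →
    (∫⁻ x, h₁ x) * (∫⁻ x, h₂ x) ≤ (∫⁻ x, h₃ x) * (∫⁻ x, h₄ x) := by
  intro n
  induction n with
  | zero =>
    intro h₁ h₂ h₃ h₄ _ _ _ _ hyp
    have huniv : (volume : Measure (Fin 0 → ℝ)) Set.univ = 1 := by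
      rw [MeasureTheory.volume_pi, Measure.pi_univ]; simp
    rw [lintegral_unique, lintegral_unique, lintegral_unique, lintegral_unique, huniv]
    simp only [mul_one]
    refine le_trans (hyp _ _) (le_of_eq ?_)
    congr 1 <;> exact congrArg _ (Subsingleton.elim _ _)
  | succ n IH =>
    intro h₁ h₂ h₃ h₄ m1 m2 m3 m4 hyp
    set e := MeasurableEquiv.piFinSuccAbove (fun _ : Fin (n+1) => ℝ) 0 with he
    have mp : MeasurePreserving e.symm (volume : Measure (ℝ × (Fin n → ℝ))) volume :=
      (volume_preserving_piFinSuccAbove (fun _ : Fin (n+1) => ℝ) 0).symm e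
    have esymm : ∀ (t : ℝ) (y : Fin n → ℝ), e.symm (t, y) = Fin.insertNth 0 t y := by
      intro t y; rfl
    have mf' : ∀ (h : (Fin (n+1) → ℝ) → ENNReal), Measurable h →
        Measurable (fun p : ℝ × (Fin n → ℝ) => h (Fin.insertNth 0 p.1 p.2)) := by
      intro h mh
      have hc : (fun p : ℝ × (Fin n → ℝ) => h (Fin.insertNth 0 p.1 p.2)) = h ∘ e.symm := by
        funext p; rw [Function.comp_apply, ← esymm p.1 p.2]
      rw [hc]; exact mh.comp e.symm.measurable
    have key : ∀ (h : (Fin (n+1) → ℝ) → ENNReal), Measurable h →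
        (∫⁻ x, h x) = ∫⁻ t : ℝ, ∫⁻ y : Fin n → ℝ, h (Fin.insertNth 0 t y) := by
      intro h mh
      calc ∫⁻ x, h x = ∫⁻ a, h (e.symm a) := (mp.lintegral_comp mh).symm
        _ = ∫⁻ p, (fun p : ℝ × (Fin n → ℝ) => h (Fin.insertNth 0 p.1 p.2)) p := by
            refine lintegral_congr fun p => ?_
            rw [← esymm p.1 p.2]
        _ = ∫⁻ t, ∫⁻ y, h (Fin.insertNth 0 t y) := by
            rw [Measure.volume_eq_prod, lintegral_prod _ (mf' h mh).aemeasurable]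
    rw [key h₁ m1, key h₂ m2, key h₃ m3, key h₄ m4]
    refine aux_oneDim _ _ _ _ ((mf' h₁ m1).lintegral_prod_right')
      ((mf' h₂ m2).lintegral_prod_right') ((mf' h₃ m3).lintegral_prod_right')
      ((mf' h₄ m4).lintegral_prod_right') ?_
    intro t s
    refine IH (fun y => h₁ (Fin.insertNth 0 t y)) (fun z => h₂ (Fin.insertNth 0 s z))
      (fun w => h₃ (Fin.insertNth 0 (t ⊓ s) w)) (fun w => h₄ (Fin.insertNth 0 (t ⊔ s) w))
      ((mf' h₁ m1).comp (measurable_prodMk_left))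
      ((mf' h₂ m2).comp (measurable_prodMk_left))
      ((mf' h₃ m3).comp (measurable_prodMk_left))
      ((mf' h₄ m4).comp (measurable_prodMk_left)) ?_
    intro y z
    have h := hyp (Fin.insertNth 0 t y) (Fin.insertNth 0 s z)
    rw [← aux_insertNth_inf, ← aux_insertNth_sup] at h
    exact h

lemma expNeg_nonneg (t : EReal) : 0 ≤ expNeg t := by
  unfold expNeg; split_ifs <;> positivity

lemma strictMono_inf {n : ℕ} {x y : Fin n → ℝ} (hx : StrictMono x) (hy : StrictMono y) :
    StrictMono (x ⊓ y) := by
  intro i j hij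
  simp only [Pi.inf_apply]
  exact lt_min ((min_le_left _ _).trans_lt (hx hij)) ((min_le_right _ _).trans_lt (hy hij))

lemma strictMono_sup {n : ℕ} {x y : Fin n → ℝ} (hx : StrictMono x) (hy : StrictMono y) :
    StrictMono (x ⊔ y) := by
  intro i j hij
  simp only [Pi.sup_apply]
  exact max_lt ((hx hij).trans_le (le_max_left _ _)) ((hy hij).trans_le (le_max_right _ _))

lemma pair_ineq {a b c d : ℝ} (hab : a < b) (hcd : c < d) :
    (b - a) * (d - c) ≤ (min b d - min a c) * (max b d - max a c) := by
  rcases le_total a c with h1 | h1 <;> rcases le_total b d with h2 | h2 <;>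
    simp only [min_eq_left, min_eq_right, max_eq_left, max_eq_right, h1, h2] <;> nlinarith

lemma coulombDensity_nonneg (n : ℕ) (β : ℝ) (V : ℝ → EReal) (x : Fin n → ℝ) :
    0 ≤ coulombDensity n β V x := by
  unfold coulombDensity
  split_ifs with h
  · refine mul_nonneg (Finset.prod_nonneg fun i _ => Finset.prod_nonneg fun j _ => ?_)
      (Finset.prod_nonneg fun i _ => expNeg_nonneg _)
    split_ifs with hij
    · exact Real.rpow_nonneg (by linarith [h hij]) _
    · norm_num
  · exact le_refl _

lemma coulombDensity_lsm (n : ℕ) (β : ℝ) (hβ : 0 ≤ β) (V : ℝ → EReal) (x y : Fin n → ℝ) :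
    coulombDensity n β V x * coulombDensity n β V y ≤
      coulombDensity n β V (x ⊓ y) * coulombDensity n β V (x ⊔ y) := by
  by_cases hx : StrictMono x
  · by_cases hy : StrictMono y
    · have hm := strictMono_inf hx hy
      have hM := strictMono_sup hx hy
      unfold coulombDensity
      rw [if_pos hx, if_pos hy, if_pos hm, if_pos hM]
      set u : ℝ → ℝ := fun t => expNeg ((β : EReal) * V t) with hu
      have hE : (∏ i : Fin n, u (x i)) * (∏ i : Fin n, u (y i)) =
          (∏ i : Fin n, u ((x ⊓ y) i)) * (∏ i : Fin n, u ((x ⊔ y) i)) := by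
        rw [← Finset.prod_mul_distrib, ← Finset.prod_mul_distrib]
        refine Finset.prod_congr rfl fun i _ => ?_
        simp only [Pi.inf_apply, Pi.sup_apply]
        rcases le_total (x i) (y i) with h | h
        · rw [min_eq_left h, max_eq_right h]
        · rw [min_eq_right h, max_eq_left h, mul_comm]
      have hW : (∏ i : Fin n, ∏ j : Fin n, if i < j then (x j - x i) ^ β else 1) *
            (∏ i : Fin n, ∏ j : Fin n, if i < j then (y j - y i) ^ β else 1) ≤
          (∏ i : Fin n, ∏ j : Fin n, if i < j then ((x ⊓ y) j - (x ⊓ y) i) ^ β else 1) *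
            (∏ i : Fin n, ∏ j : Fin n, if i < j then ((x ⊔ y) j - (x ⊔ y) i) ^ β else 1) := by
        rw [← Finset.prod_mul_distrib, ← Finset.prod_mul_distrib]
        refine Finset.prod_le_prod (fun i _ => ?_) (fun i _ => ?_)
        · refine mul_nonneg (Finset.prod_nonneg fun j _ => ?_) (Finset.prod_nonneg fun j _ => ?_)
          · split_ifs with hij
            · exact Real.rpow_nonneg (by linarith [hx hij]) _
            · norm_num
          · split_ifs with hij
            · exact Real.rpow_nonneg (by linarith [hy hij]) _
            · norm_num
        rw [← Finset.prod_mul_distrib, ← Finset.prod_mul_distrib]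
        refine Finset.prod_le_prod (fun j _ => ?_) (fun j _ => ?_)
        · split_ifs with hij
          · exact mul_nonneg (Real.rpow_nonneg (by linarith [hx hij]) _)
              (Real.rpow_nonneg (by linarith [hy hij]) _)
          · norm_num
        split_ifs with hij
        · have hx' : x i < x j := hx hij
          have hy' : y i < y j := hy hij
          rw [← Real.mul_rpow (by linarith) (by linarith),
            ← Real.mul_rpow (by linarith [hm hij]) (by linarith [hM hij])]
          refine Real.rpow_le_rpow (mul_nonneg (by linarith) (by linarith)) ?_ hβ
          simp only [Pi.inf_apply, Pi.sup_apply]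
          exact pair_ineq hx' hy'
        · norm_num
      calc (∏ i : Fin n, ∏ j : Fin n, if i < j then (x j - x i) ^ β else 1) *
            (∏ i : Fin n, u (x i)) *
            ((∏ i : Fin n, ∏ j : Fin n, if i < j then (y j - y i) ^ β else 1) *
            (∏ i : Fin n, u (y i)))
          = ((∏ i : Fin n, ∏ j : Fin n, if i < j then (x j - x i) ^ β else 1) *
            (∏ i : Fin n, ∏ j : Fin n, if i < j then (y j - y i) ^ β else 1)) *
            ((∏ i : Fin n, u (x i)) * (∏ i : Fin n, u (y i))) := by ring
        _ ≤ ((∏ i : Fin n, ∏ j : Fin n, if i < j then ((x ⊓ y) j - (x ⊓ y) i) ^ β else 1) *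
            (∏ i : Fin n, ∏ j : Fin n, if i < j then ((x ⊔ y) j - (x ⊔ y) i) ^ β else 1)) *
            ((∏ i : Fin n, u ((x ⊓ y) i)) * (∏ i : Fin n, u ((x ⊔ y) i))) := by
            rw [hE]
            refine mul_le_mul_of_nonneg_right hW ?_
            exact mul_nonneg (Finset.prod_nonneg fun i _ => expNeg_nonneg _)
              (Finset.prod_nonneg fun i _ => expNeg_nonneg _)
        _ = _ := by ring
    · rw [show coulombDensity n β V y = 0 by unfold coulombDensity; rw [if_neg hy], mul_zero]
      exact mul_nonneg (coulombDensity_nonneg _ _ _ _) (coulombDensity_nonneg _ _ _ _)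
  · rw [show coulombDensity n β V x = 0 by unfold coulombDensity; rw [if_neg hx], zero_mul]
    exact mul_nonneg (coulombDensity_nonneg _ _ _ _) (coulombDensity_nonneg _ _ _ _)

end Aux

/-- For any potential `V` and any `β > 0` (with finite positive normalizing constant),
the density of the ordered β-Coulomb gas is log-supermodular; consequently, the points
of the gas are positively associated. -/
theorem logSupermodular_and_positively_associated_coulomb_gas
    (n : ℕ) (hn : 1 ≤ n) (β : ℝ) (hβ : 0 < β) (V : ℝ → EReal)
    (hVbot : ∀ x, V x ≠ ⊥)
    (hInt : Integrable (coulombDensity n β V))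
    (hZ : 0 < ∫ x : Fin n → ℝ, coulombDensity n β V x) :
    (∀ x y : Fin n → ℝ,
      (coulombDensity n β V x / ∫ z : Fin n → ℝ, coulombDensity n β V z) *
        (coulombDensity n β V y / ∫ z : Fin n → ℝ, coulombDensity n β V z) ≤
      (coulombDensity n β V (x ⊓ y) / ∫ z : Fin n → ℝ, coulombDensity n β V z) *
        (coulombDensity n β V (x ⊔ y) / ∫ z : Fin n → ℝ, coulombDensity n β V z)) ∧
    (∀ φ ψ : (Fin n → ℝ) → ℝ,
      Measurable φ → Measurable ψ → Monotone φ → Monotone ψ →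
      (∃ C, ∀ x, |φ x| ≤ C) → (∃ C, ∀ x, |ψ x| ≤ C) →
      (∫ x, φ x ∂(coulombMeasure n β V)) * (∫ x, ψ x ∂(coulombMeasure n β V)) ≤
        ∫ x, φ x * ψ x ∂(coulombMeasure n β V)) := by
  set f := coulombDensity n β V with hf
  set Z := ∫ z : Fin n → ℝ, coulombDensity n β V z with hZdef
  set d := fun x : Fin n → ℝ => f x / Z with hd
  have hd_nonneg : ∀ x, 0 ≤ d x := fun x =>
    div_nonneg (coulombDensity_nonneg n β V x) hZ.le
  have hd_lsm : ∀ x y, d x * d y ≤ d (x ⊓ y) * d (x ⊔ y) := by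
    intro x y
    rw [hd]
    simp only [div_mul_div_comm]
    exact div_le_div_of_nonneg_right (coulombDensity_lsm n β hβ.le V x y)
      (by positivity)
  constructor
  · exact hd_lsm
  -- part 2
  intro φ ψ hφm hψm hφmono hψmono ⟨C₁, hC₁⟩ ⟨C₂, hC₂⟩
  set μ := coulombMeasure n β V with hμ
  set F := fun x : Fin n → ℝ => ENNReal.ofReal (d x) with hF
  have hμF : μ = volume.withDensity F := rfl
  have hd_int : Integrable d := hInt.div_const Z
  have hF_aem : AEMeasurable F volume := by
    exact ENNReal.measurable_ofReal.comp_aemeasurable hd_int.aemeasurable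
  have hμuniv : μ Set.univ = 1 := by
    rw [hμF, withDensity_apply _ MeasurableSet.univ, Measure.restrict_univ]
    rw [← ofReal_integral_eq_lintegral_ofReal hd_int (Filter.Eventually.of_forall hd_nonneg)]
    have : ∫ x, d x = 1 := by
      rw [hd]
      simp only [integral_div]
      exact div_self (ne_of_gt hZ)
    rw [this, ENNReal.ofReal_one]
  have hμprob : IsProbabilityMeasure μ := ⟨hμuniv⟩
  -- measurable bracketing of F
  have hnull : volume {x | F x ≠ hF_aem.mk F x} = 0 := by
    rw [← MeasureTheory.ae_iff]
    exact hF_aem.ae_eq_mk.mono fun x h => by simp [h]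
  obtain ⟨N, hNsub, hNmeas, hNnull⟩ := exists_measurable_superset_of_null hnull
  classical
  set flo := N.piecewise (fun _ => (0 : ENNReal)) (hF_aem.mk F) with hflo
  set fhi := N.piecewise (fun _ => (⊤ : ENNReal)) (hF_aem.mk F) with hfhi
  have hflo_meas : Measurable flo := Measurable.piecewise hNmeas measurable_const hF_aem.measurable_mk
  have hfhi_meas : Measurable fhi := Measurable.piecewise hNmeas measurable_const hF_aem.measurable_mk
  have hNae : ∀ᵐ x : Fin n → ℝ, x ∉ N := measure_eq_zero_iff_ae_notMem.1 hNnull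
  have hout : ∀ x ∉ N, F x = hF_aem.mk F x := by
    intro x hx
    by_contra h
    exact hx (hNsub h)
  have hflo_ae : flo =ᵐ[volume] F := by
    filter_upwards [hNae] with x hx
    rw [hflo, Set.piecewise_eq_of_notMem _ _ _ hx, ← hout x hx]
  have hfhi_ae : fhi =ᵐ[volume] F := by
    filter_upwards [hNae] with x hx
    rw [hfhi, Set.piecewise_eq_of_notMem _ _ _ hx, ← hout x hx]
  have hflo_le : ∀ x, flo x ≤ F x := by
    intro x
    by_cases hx : x ∈ N
    · rw [hflo, Set.piecewise_eq_of_mem _ _ _ hx]; exact zero_le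
    · rw [hflo, Set.piecewise_eq_of_notMem _ _ _ hx, ← hout x hx]
  have hfhi_ge : ∀ x, F x ≤ fhi x := by
    intro x
    by_cases hx : x ∈ N
    · rw [hfhi, Set.piecewise_eq_of_mem _ _ _ hx]; exact le_top
    · rw [hfhi, Set.piecewise_eq_of_notMem _ _ _ hx, ← hout x hx]
  -- shifted nonnegative versions
  have hC₁0 : 0 ≤ C₁ := le_trans (abs_nonneg _) (hC₁ 0)
  have hC₂0 : 0 ≤ C₂ := le_trans (abs_nonneg _) (hC₂ 0)
  set φ' := fun x => φ x + C₁ with hφ'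
  set ψ' := fun x => ψ x + C₂ with hψ'
  have hφ'_nonneg : ∀ x, 0 ≤ φ' x := fun x => by
    have := (abs_le.1 (hC₁ x)).1; simp only [hφ']; linarith
  have hψ'_nonneg : ∀ x, 0 ≤ ψ' x := fun x => by
    have := (abs_le.1 (hC₂ x)).1; simp only [hψ']; linarith
  have hφ'_le : ∀ x, φ' x ≤ C₁ + C₁ := fun x => by
    have := (abs_le.1 (hC₁ x)).2; simp only [hφ']; linarith
  have hψ'_le : ∀ x, ψ' x ≤ C₂ + C₂ := fun x => by
    have := (abs_le.1 (hC₂ x)).2; simp only [hψ']; linarith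
  set Φ := fun x => ENNReal.ofReal (φ' x) with hΦ
  set Ψ := fun x => ENNReal.ofReal (ψ' x) with hΨ
  have hΦm : Measurable Φ := (hφm.add_const _).ennreal_ofReal
  have hΨm : Measurable Ψ := (hψm.add_const _).ennreal_ofReal
  -- the four-functions hypothesis
  have hkey : ∀ x y, (Φ x * flo x) * (Ψ y * flo y) ≤
      fhi (x ⊓ y) * (Φ (x ⊔ y) * Ψ (x ⊔ y) * fhi (x ⊔ y)) := by
    intro x y
    have hff : flo x * flo y ≤ fhi (x ⊓ y) * fhi (x ⊔ y) := by
      calc flo x * flo y ≤ F x * F y := mul_le_mul' (hflo_le x) (hflo_le y)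
        _ ≤ F (x ⊓ y) * F (x ⊔ y) := by
            simp only [hF]
            rw [← ENNReal.ofReal_mul (hd_nonneg x), ← ENNReal.ofReal_mul (hd_nonneg _)]
            exact ENNReal.ofReal_le_ofReal (hd_lsm x y)
        _ ≤ fhi (x ⊓ y) * fhi (x ⊔ y) := mul_le_mul' (hfhi_ge _) (hfhi_ge _)
    have hΦle : Φ x ≤ Φ (x ⊔ y) :=
      ENNReal.ofReal_le_ofReal (add_le_add_left (hφmono le_sup_left) _)
    have hΨle : Ψ y ≤ Ψ (x ⊔ y) :=
      ENNReal.ofReal_le_ofReal (add_le_add_left (hψmono le_sup_right) _)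
    calc (Φ x * flo x) * (Ψ y * flo y) = (Φ x * Ψ y) * (flo x * flo y) := by ring
      _ ≤ (Φ (x ⊔ y) * Ψ (x ⊔ y)) * (fhi (x ⊓ y) * fhi (x ⊔ y)) :=
          mul_le_mul' (mul_le_mul' hΦle hΨle) hff
      _ = fhi (x ⊓ y) * (Φ (x ⊔ y) * Ψ (x ⊔ y) * fhi (x ⊔ y)) := by ring
  have master := aux_master n (fun x => Φ x * flo x) (fun x => Ψ x * flo x) fhi
      (fun x => Φ x * Ψ x * fhi x) (hΦm.mul hflo_meas) (hΨm.mul hflo_meas) hfhi_meas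
      ((hΦm.mul hΨm).mul hfhi_meas) hkey
  -- convert lintegrals to the measure μ
  have hconv : ∀ (g : (Fin n → ℝ) → ENNReal), Measurable g →
      ∀ (h : (Fin n → ℝ) → ENNReal), h =ᵐ[volume] F →
      (∫⁻ x, g x * h x) = ∫⁻ x, g x ∂μ := by
    intro g hg h hh
    rw [hμF, lintegral_withDensity_eq_lintegral_mul₀ hF_aem hg.aemeasurable]
    refine lintegral_congr_ae ?_
    filter_upwards [hh] with x hx
    simp only [Pi.mul_apply, hx, mul_comm]
  have e1 : (∫⁻ x, Φ x * flo x) = ∫⁻ x, Φ x ∂μ := hconv Φ hΦm flo hflo_ae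
  have e2 : (∫⁻ x, Ψ x * flo x) = ∫⁻ x, Ψ x ∂μ := hconv Ψ hΨm flo hflo_ae
  have e3 : (∫⁻ x, fhi x) = 1 := by
    have := hconv (fun _ => 1) measurable_const fhi hfhi_ae
    simpa [hμuniv] using this
  have e4 : (∫⁻ x, Φ x * Ψ x * fhi x) = ∫⁻ x, Φ x * Ψ x ∂μ :=
    hconv (fun x => Φ x * Ψ x) (hΦm.mul hΨm) fhi hfhi_ae
  rw [e1, e2, e3, e4, one_mul] at master
  -- finiteness
  have hbnd : (∫⁻ x, Φ x ∂μ) ≤ ENNReal.ofReal (C₁ + C₁) := by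
    calc (∫⁻ x, Φ x ∂μ) ≤ ∫⁻ _, ENNReal.ofReal (C₁ + C₁) ∂μ :=
        lintegral_mono fun x => ENNReal.ofReal_le_ofReal (hφ'_le x)
      _ = ENNReal.ofReal (C₁ + C₁) := by rw [lintegral_const, hμuniv, mul_one]
  have hbndψ : (∫⁻ x, Ψ x ∂μ) ≤ ENNReal.ofReal (C₂ + C₂) := by
    calc (∫⁻ x, Ψ x ∂μ) ≤ ∫⁻ _, ENNReal.ofReal (C₂ + C₂) ∂μ :=
        lintegral_mono fun x => ENNReal.ofReal_le_ofReal (hψ'_le x)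
      _ = ENNReal.ofReal (C₂ + C₂) := by rw [lintegral_const, hμuniv, mul_one]
  have hbndφψ : (∫⁻ x, Φ x * Ψ x ∂μ) ≤ ENNReal.ofReal (C₁ + C₁) * ENNReal.ofReal (C₂ + C₂) := by
    calc (∫⁻ x, Φ x * Ψ x ∂μ)
        ≤ ∫⁻ _, ENNReal.ofReal (C₁ + C₁) * ENNReal.ofReal (C₂ + C₂) ∂μ :=
        lintegral_mono fun x => mul_le_mul' (ENNReal.ofReal_le_ofReal (hφ'_le x))
          (ENNReal.ofReal_le_ofReal (hψ'_le x))
      _ = _ := by rw [lintegral_const, hμuniv, mul_one]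
  have hφψ_ne : (∫⁻ x, Φ x * Ψ x ∂μ) ≠ ⊤ :=
    ne_top_of_le_ne_top (ENNReal.mul_ne_top ENNReal.ofReal_ne_top ENNReal.ofReal_ne_top) hbndφψ
  have hφ_ne : (∫⁻ x, Φ x ∂μ) ≠ ⊤ := ne_top_of_le_ne_top ENNReal.ofReal_ne_top hbnd
  have hψ_ne : (∫⁻ x, Ψ x ∂μ) ≠ ⊤ := ne_top_of_le_ne_top ENNReal.ofReal_ne_top hbndψ
  -- pass to real integrals
  have rφ : ∫ x, φ' x ∂μ = (∫⁻ x, Φ x ∂μ).toReal :=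
    integral_eq_lintegral_of_nonneg_ae (Filter.Eventually.of_forall hφ'_nonneg)
      ((hφm.add_const _).aestronglyMeasurable)
  have rψ : ∫ x, ψ' x ∂μ = (∫⁻ x, Ψ x ∂μ).toReal :=
    integral_eq_lintegral_of_nonneg_ae (Filter.Eventually.of_forall hψ'_nonneg)
      ((hψm.add_const _).aestronglyMeasurable)
  have rφψ : ∫ x, φ' x * ψ' x ∂μ = (∫⁻ x, Φ x * Ψ x ∂μ).toReal := by
    rw [integral_eq_lintegral_of_nonneg_ae
      (Filter.Eventually.of_forall fun x => mul_nonneg (hφ'_nonneg x) (hψ'_nonneg x))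
      (((hφm.add_const _).mul (hψm.add_const _)).aestronglyMeasurable)]
    congr 1
    refine lintegral_congr fun x => ?_
    rw [ENNReal.ofReal_mul (hφ'_nonneg x)]
  have key_real : (∫ x, φ' x ∂μ) * (∫ x, ψ' x ∂μ) ≤ ∫ x, φ' x * ψ' x ∂μ := by
    rw [rφ, rψ, rφψ, ← ENNReal.toReal_mul]
    exact ENNReal.toReal_mono hφψ_ne master
  -- integrability of everything w.r.t. μ
  have hφint : Integrable φ μ := by
    refine Integrable.mono' (integrable_const C₁) hφm.aestronglyMeasurable
      (Filter.Eventually.of_forall fun x => ?_)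
    rw [Real.norm_eq_abs]; exact hC₁ x
  have hψint : Integrable ψ μ := by
    refine Integrable.mono' (integrable_const C₂) hψm.aestronglyMeasurable
      (Filter.Eventually.of_forall fun x => ?_)
    rw [Real.norm_eq_abs]; exact hC₂ x
  have hφψint : Integrable (fun x => φ x * ψ x) μ := by
    refine Integrable.mono' (integrable_const (C₁ * C₂)) (hφm.mul hψm).aestronglyMeasurable
      (Filter.Eventually.of_forall fun x => ?_)
    rw [Real.norm_eq_abs, abs_mul]
    exact mul_le_mul (hC₁ x) (hC₂ x) (abs_nonneg _) hC₁0
  have iconst : ∀ c : ℝ, ∫ (_ : Fin n → ℝ), c ∂μ = c := by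
    intro c
    rw [integral_const]
    simp [hμuniv]
  have eφ : ∫ x, φ' x ∂μ = (∫ x, φ x ∂μ) + C₁ := by
    rw [hφ', integral_add hφint (integrable_const _), iconst]
  have eψ : ∫ x, ψ' x ∂μ = (∫ x, ψ x ∂μ) + C₂ := by
    rw [hψ', integral_add hψint (integrable_const _), iconst]
  have eφψ : ∫ x, φ' x * ψ' x ∂μ =
      (∫ x, φ x * ψ x ∂μ) + C₂ * (∫ x, φ x ∂μ) + C₁ * (∫ x, ψ x ∂μ) + C₁ * C₂ := by
    have expand : (fun x => φ' x * ψ' x) =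
        fun x => φ x * ψ x + C₂ * φ x + C₁ * ψ x + C₁ * C₂ := by
      funext x; simp only [hφ', hψ']; ring
    have i1 : Integrable (fun x => φ x * ψ x + C₂ * φ x) μ := hφψint.add (hφint.const_mul C₂)
    have i2 : Integrable (fun x => φ x * ψ x + C₂ * φ x + C₁ * ψ x) μ :=
      i1.add (hψint.const_mul C₁)
    rw [expand, integral_add i2 (integrable_const _), integral_add i1 (hψint.const_mul C₁),
      integral_add hφψint (hφint.const_mul C₂), integral_const_mul, integral_const_mul, iconst]
  rw [eφ, eψ, eφψ] at key_real
  nlinarith [key_real]
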